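/- Let θ be a real number with 0 < θ < π/2 and let h = cos θ + sin θ·i ∈ ℍ. Let r ∈ ℝ and let p be a pure quaternion, not both zero, and let x be a nonzero quaternion. Then r•x + p·x·h ≠ 0. Consequently, the multiplication a ∘_h x = r(a)•x + p(a)·x·h, where a = r(a) + p(a)·h is the unique splitting of a into a real part and a pure quaternion times h, has no zero divisors. -/

import Mathlib

open Quaternion

/-- The quaternion `h = cos θ + sin θ·i`, i.e. the image in `ℍ` of the complex
number `cos θ + sin θ·i`. -/
noncomputable def unitComplexQuat (θ : ℝ) : Quaternion ℝ :=
  ⟨Real.cos θ, Real.sin θ, 0, 0⟩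

/-- Let `h = cos θ + sin θ·i` with `0 < θ < π/2`, let `r` be a real number and
`p` a pure quaternion, not both zero, and let `x` be a nonzero quaternion.
Then `r•x + p·x·h ≠ 0`; hence Hähl's semifield multiplication
`a ∘_h x = r(a)•x + p(a)·x·h` has no zero divisors. -/
theorem haehl_semifield_no_zero_divisors (θ : ℝ) (hθ₀ : 0 < θ) (hθ₁ : θ < Real.pi / 2)
    (r : ℝ) (p : Quaternion ℝ) (hp : p.re = 0) (hrp : ¬(r = 0 ∧ p = 0))
    (x : Quaternion ℝ) (hx : x ≠ 0) :
    r • x + p * x * unitComplexQuat θ ≠ 0 := by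
  intro hEq
  set h : Quaternion ℝ := unitComplexQuat θ with hh
  obtain ⟨s, hs⟩ : ∃ s : ℝ, s = p.imI ^ 2 + p.imJ ^ 2 + p.imK ^ 2 := ⟨_, rfl⟩
  have hpp : p * p = (-s) • (1 : Quaternion ℝ) := by
    ext <;>
      simp [Quaternion.re_mul, Quaternion.imI_mul, Quaternion.imJ_mul,
        Quaternion.imK_mul, hp, hs] <;> ring
  have E : p * x * h = -(r • x) := eq_neg_of_add_eq_zero_right hEq
  have E2 : p * (p * x * h) * h = (r ^ 2) • x := by
    rw [E, mul_neg, neg_mul, mul_smul_comm, smul_mul_assoc, E, smul_neg, neg_neg,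
      smul_smul, ← pow_two]
  have E3 : p * (p * x * h) * h = (-s) • (x * (h * h)) := by
    have hassoc : p * (p * x * h) * h = (p * p) * (x * (h * h)) := by
      simp only [mul_assoc]
    rw [hassoc, hpp, smul_mul_assoc, one_mul]
  have E4 : x * (s • (h * h) + (r ^ 2) • (1 : Quaternion ℝ)) = 0 := by
    have h1 : (-s) • (x * (h * h)) = (r ^ 2) • x := by rw [← E3, E2]
    have h2 : s • (x * (h * h)) = -((r ^ 2) • x) := by
      rw [← neg_neg s, neg_smul, h1]
    rw [mul_add, mul_smul_comm, h2, mul_smul_comm, mul_one, neg_add_cancel]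
  have hfac : s • (h * h) + (r ^ 2) • (1 : Quaternion ℝ) = 0 := by
    rcases mul_eq_zero.mp E4 with h' | h'
    · exact absurd h' hx
    · exact h'
  have hsin : 0 < Real.sin θ := Real.sin_pos_of_pos_of_lt_pi hθ₀
    (lt_trans hθ₁ (by linarith [Real.pi_pos]))
  have hcos : 0 < Real.cos θ := Real.cos_pos_of_mem_Ioo ⟨by linarith [Real.pi_pos], hθ₁⟩
  have himI : s * (Real.cos θ * Real.sin θ + Real.sin θ * Real.cos θ) = 0 := by
    have := congrArg QuaternionAlgebra.imI hfac
    rw [Quaternion.imI_add, Quaternion.imI_smul, Quaternion.imI_mul] at this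
    simpa [Quaternion.imI_mul, hh, unitComplexQuat] using this
  have hs0 : s = 0 := by
    rcases mul_eq_zero.mp himI with h' | h'
    · exact h'
    · nlinarith
  have hre : s * (Real.cos θ * Real.cos θ - Real.sin θ * Real.sin θ) + r ^ 2 = 0 := by
    have := congrArg QuaternionAlgebra.re hfac
    rw [Quaternion.re_add, Quaternion.re_smul, Quaternion.re_mul] at this
    simpa [Quaternion.re_mul, hh, unitComplexQuat] using this
  have hr0 : r = 0 := by nlinarith [sq_nonneg r]
  have hsum : p.imI ^ 2 + p.imJ ^ 2 + p.imK ^ 2 = 0 := by rw [← hs, hs0]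
  have h1 : p.imI = 0 := by
    have := sq_nonneg p.imI; have := sq_nonneg p.imJ; have := sq_nonneg p.imK
    have hz : p.imI ^ 2 = 0 := by linarith
    exact pow_eq_zero_iff (n := 2) (by norm_num) |>.mp hz
  have h2 : p.imJ = 0 := by
    have := sq_nonneg p.imI; have := sq_nonneg p.imJ; have := sq_nonneg p.imK
    have hz : p.imJ ^ 2 = 0 := by linarith
    exact pow_eq_zero_iff (n := 2) (by norm_num) |>.mp hz
  have h3 : p.imK = 0 := by
    have := sq_nonneg p.imI; have := sq_nonneg p.imJ; have := sq_nonneg p.imK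
    have hz : p.imK ^ 2 = 0 := by linarith
    exact pow_eq_zero_iff (n := 2) (by norm_num) |>.mp hz
  have hp0 : p = 0 := by ext <;> simp [hp, h1, h2, h3]
  exact hrp ⟨hr0, hp0⟩
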